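/- Let D be a triangulated category with a t-structure whose heart A has the property that every object of A has finite length, and suppose the t-structure is nondegenerate (an object all of whose t-cohomology objects vanish is zero). Let F : D → D' be a t-exact triangulated functor to a triangulated category D' with a t-structure, such that the restriction of F to the heart A is faithful and exact. Then F is conservative: a morphism f in D such that F(f) is an isomorphism is itself an isomorphism. -/

import Mathlib

open CategoryTheory CategoryTheory.Limits CategoryTheory.Pretriangulated

/-- Let `C` be a triangulated category with a nondegenerate t-structure `t` whose heart
has all objects of finite length, and let `F : C ⥤ D` be a t-exact triangulated functor
(to a triangulated category `D` with a t-structure `t'`) whose restriction to the heart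
of `t` is faithful (it is automatically exact, being `H⁰ ∘ F` on the heart).  Then `F`
is conservative. -/
theorem t_exact_faithful_on_heart_conservative
    (C D : Type*) [Category C] [Category D]
    [Preadditive C] [HasZeroObject C] [HasShift C ℤ]
    [∀ n : ℤ, (shiftFunctor C n).Additive] [Pretriangulated C]
    [Preadditive D] [HasZeroObject D] [HasShift D ℤ]
    [∀ n : ℤ, (shiftFunctor D n).Additive] [Pretriangulated D]
    (t : Triangulated.TStructure C) (t' : Triangulated.TStructure D)
    (F : C ⥤ D) [F.CommShift ℤ] [F.IsTriangulated]
    -- `F` is t-exact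
    (hFle : ∀ (n : ℤ) (X : C), t.le n X → t'.le n (F.obj X))
    (hFge : ∀ (n : ℤ) (X : C), t.ge n X → t'.ge n (F.obj X))
    -- the t-structure `t` is nondegenerate
    (hnd₁ : ∀ X : C, (∀ n : ℤ, t.le n X) → IsZero X)
    (hnd₂ : ∀ X : C, (∀ n : ℤ, t.ge n X) → IsZero X)
    -- every object of the heart of `t` has finite length: its subobject lattice
    -- (in the heart) satisfies both chain conditions
    (hfl : ∀ X : ObjectProperty.FullSubcategory (fun X : C => t.le 0 X ∧ t.ge 0 X),
      WellFoundedLT (Subobject X) ∧ WellFoundedGT (Subobject X))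
    -- the restriction of `F` to the heart of `t` is faithful
    (hfaith : ∀ X Y : C, t.le 0 X ∧ t.ge 0 X → t.le 0 Y ∧ t.ge 0 Y →
      ∀ f g : X ⟶ Y, F.map f = F.map g → f = g) :
    ∀ {X Y : C} (f : X ⟶ Y), IsIso (F.map f) → IsIso f := by
  -- vanishing of morphisms from `LE a` to `GE b` when `a < b`, for `t`
  have zC : ∀ {P Q : C} (f : P ⟶ Q) (a b : ℤ), a < b → t.le a P → t.ge b Q → f = 0 := by
    intro P Q f a b hab hP hQ
    have h0 : t.le 0 (P⟦a⟧) := t.le_shift a a 0 (by omega) P hP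
    have h1 : t.ge 1 (Q⟦a⟧) := t.ge_shift (a + 1) a 1 (by omega) Q (t.ge_antitone (by omega : a + 1 ≤ b) Q hQ)
    exact (shiftFunctor C a).map_injective
      (by rw [t.zero' ((shiftFunctor C a).map f) h0 h1, Functor.map_zero])
  -- same for `t'`
  have zD : ∀ {P Q : D} (f : P ⟶ Q) (a b : ℤ), a < b → t'.le a P → t'.ge b Q → f = 0 := by
    intro P Q f a b hab hP hQ
    have h0 : t'.le 0 (P⟦a⟧) := t'.le_shift a a 0 (by omega) P hP
    have h1 : t'.ge 1 (Q⟦a⟧) := t'.ge_shift (a + 1) a 1 (by omega) Q (t'.ge_antitone (by omega : a + 1 ≤ b) Q hQ)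
    exact (shiftFunctor D a).map_injective
      (by rw [t'.zero' ((shiftFunctor D a).map f) h0 h1, Functor.map_zero])
  -- an object whose shift is zero is zero
  have unshiftC : ∀ (X : C) (m : ℤ), IsZero (X⟦m⟧) → IsZero X := by
    intro X m hX
    exact IsZero.of_iso ((shiftFunctor C (-m)).map_isZero hX) ((shiftEquiv C m).unitIso.app X)
  have unshiftD : ∀ (X : D) (m : ℤ), IsZero (X⟦m⟧) → IsZero X := by
    intro X m hX
    exact IsZero.of_iso ((shiftFunctor D (-m)).map_isZero hX) ((shiftEquiv D m).unitIso.app X)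
  -- objects of the (shifted) heart on which `F` vanishes are zero
  have heart : ∀ (W : C) (n : ℤ), t.le n W → t.ge n W → IsZero (F.obj W) → IsZero W := by
    intro W n hle hge hFW
    have h0 : t.le 0 (W⟦n⟧) := t.le_shift n n 0 (by omega) W hle
    have h0' : t.ge 0 (W⟦n⟧) := t.ge_shift n n 0 (by omega) W hge
    have hFWn : IsZero (F.obj (W⟦n⟧)) :=
      IsZero.of_iso ((shiftFunctor D n).map_isZero hFW) ((F.commShiftIso n).app W)
    have hid : 𝟙 (W⟦n⟧) = 0 :=
      hfaith _ _ ⟨h0, h0'⟩ ⟨h0, h0'⟩ _ _ (hFWn.eq_of_src _ _)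
    exact unshiftC W n ((IsZero.iff_id_eq_zero _).2 hid)
  -- truncation triangles of objects killed by `F` have both pieces killed by `F`
  have trunc : ∀ (Z : C), IsZero (F.obj Z) → ∀ n : ℤ,
      ∃ (A B : C) (f : A ⟶ Z) (g : Z ⟶ B) (h : B ⟶ A⟦(1:ℤ)⟧),
        t.le n A ∧ t.ge (n+1) B ∧ (Triangle.mk f g h ∈ distTriang C) ∧
        IsZero (F.obj A) ∧ IsZero (F.obj B) := by
    intro Z hZ n
    obtain ⟨A, B, hA, hB, f, g, h, mem⟩ := t.exists_triangle Z n (n+1) rfl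
    have memF := F.map_distinguished _ mem
    have hiso : IsIso ((F.mapTriangle.obj (Triangle.mk f g h)).mor₃) :=
      (Triangle.isZero₂_iff_isIso₃ _ memF).1 hZ
    have eiso : F.obj B ≅ (F.obj A)⟦(1:ℤ)⟧ :=
      @asIso _ _ _ _ ((F.mapTriangle.obj (Triangle.mk f g h)).mor₃) hiso
    have hBle : t'.le (n-1) (F.obj B) :=
      (t'.le (n-1)).prop_of_iso eiso.symm (t'.le_shift n 1 (n-1) (by omega) _ (hFle n A hA))
    have hFB : IsZero (F.obj B) :=
      (IsZero.iff_id_eq_zero _).2 (zD (𝟙 (F.obj B)) (n-1) (n+1) (by omega) hBle (hFge _ _ hB))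
    have hFA : IsZero (F.obj A) := unshiftD _ 1 (IsZero.of_iso hFB eiso.symm)
    exact ⟨A, B, f, g, h, hA, hB, mem, hFA, hFB⟩
  -- climbing up: killed by `F` and `≥ n` implies `≥ n+1`
  have geStep : ∀ (W : C) (n : ℤ), t.ge n W → IsZero (F.obj W) → t.ge (n+1) W := by
    intro W n hge hFW
    obtain ⟨A, B, f, g, h, hA, hB, mem, hFA, hFB⟩ := trunc W hFW n
    -- show `A` is in the `n`-th heart, hence zero
    obtain ⟨A', B', hA', hB', f', g', h', mem'⟩ := t.exists_triangle A (n-1) n (by omega)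
    have c0 : f' ≫ f = 0 := zC (f' ≫ f) (n-1) n (by omega) hA' hge
    obtain ⟨ψ, hψ⟩ := Triangle.coyoneda_exact₂ _
      (inv_rot_of_distTriang _ mem) f' (by exact c0)
    have hψ0 : ψ = 0 := zC ψ (n-1) (n+2) (by omega) hA'
      (t.ge_shift (n+1) (-1) (n+2) (by omega) _ hB)
    have hf'0 : f' = 0 := by rw [hψ, hψ0, zero_comp]; rfl
    obtain ⟨χ, hχ⟩ := Triangle.coyoneda_exact₂ _
      (inv_rot_of_distTriang _ mem') (𝟙 A') (by exact (Category.id_comp _).trans hf'0)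
    have hχ0 : χ = 0 := zC χ (n-1) (n+1) (by omega) hA'
      (t.ge_shift n (-1) (n+1) (by omega) _ hB')
    have hA'zero : IsZero A' := (IsZero.iff_id_eq_zero _).2 (by rw [hχ, hχ0, zero_comp]; rfl)
    have hg' : IsIso g' := (Triangle.isZero₁_iff_isIso₂ _ mem').1 hA'zero
    have hAge : t.ge n A := (t.ge n).prop_of_iso (asIso g').symm hB'
    have hAzero : IsZero A := heart A n hA hAge hFA
    have hg : IsIso g := (Triangle.isZero₁_iff_isIso₂ _ mem).1 hAzero
    exact (t.ge (n+1)).prop_of_iso (asIso g).symm hB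
  -- climbing down: killed by `F` and `≤ n` implies `≤ n-1`
  have leStep : ∀ (W : C) (n : ℤ), t.le n W → IsZero (F.obj W) → t.le (n-1) W := by
    intro W n hle hFW
    obtain ⟨A, B, f, g, h, hA, hB, mem, hFA, hFB⟩ := trunc W hFW (n-1)
    have hB' : t.ge n B := by simpa using hB
    -- show `B` is in the `n`-th heart, hence zero
    obtain ⟨B₁, B₂, hB₁, hB₂, f₁, g₁, h₁, mem₁⟩ := t.exists_triangle B n (n+1) rfl
    have c0 : g ≫ g₁ = 0 := zC (g ≫ g₁) n (n+1) (by omega) hle hB₂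
    obtain ⟨χ, hχ⟩ := Triangle.yoneda_exact₃ _ mem g₁ c0
    have hχ0 : χ = 0 := zC χ (n-2) (n+1) (by omega)
      (t.le_shift (n-1) 1 (n-2) (by omega) _ hA) hB₂
    have hg₁0 : g₁ = 0 := by rw [hχ, hχ0, comp_zero]; rfl
    obtain ⟨χ₂, hχ₂⟩ := Triangle.yoneda_exact₃ _ mem₁ (𝟙 B₂) (by exact (Category.comp_id _).trans hg₁0)
    have hχ₂0 : χ₂ = 0 := zC χ₂ (n-1) (n+1) (by omega)
      (t.le_shift n 1 (n-1) (by omega) _ hB₁) hB₂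
    have hB₂zero : IsZero B₂ := (IsZero.iff_id_eq_zero _).2 (by rw [hχ₂, hχ₂0, comp_zero]; rfl)
    have hf₁ : IsIso f₁ := (Triangle.isZero₃_iff_isIso₁ _ mem₁).1 hB₂zero
    have hBle : t.le n B := (t.le n).prop_of_iso (asIso f₁) hB₁
    have hBzero : IsZero B := heart B n hBle hB' hFB
    have hf : IsIso f := (Triangle.isZero₃_iff_isIso₁ _ mem).1 hBzero
    exact (t.le (n-1)).prop_of_iso (asIso f) hA
  -- an object of `LE m` killed by `F` is `LE n` for all `n`, hence zero
  have zeroLE : ∀ (W : C) (m : ℤ), t.le m W → IsZero (F.obj W) → IsZero W := by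
    intro W m hm hFW
    refine hnd₁ W (fun n => ?_)
    by_cases hn : m ≤ n
    · exact t.le_monotone hn W hm
    · have down : ∀ k : ℕ, t.le (m - k) W := by
        intro k
        induction k with
        | zero => simpa using hm
        | succ k ih =>
          have h := leStep W (m - k) ih hFW
          have e : m - ((k+1 : ℕ) : ℤ) = m - (k : ℤ) - 1 := by push_cast; ring
          rw [e]; exact h
      have := down (m - n).toNat
      have he : m - ((m - n).toNat : ℤ) = n := by omega
      rwa [he] at this
  -- an object of `GE m` killed by `F` is `GE n` for all `n`, hence zero
  have zeroGE : ∀ (W : C) (m : ℤ), t.ge m W → IsZero (F.obj W) → IsZero W := by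
    intro W m hm hFW
    refine hnd₂ W (fun n => ?_)
    by_cases hn : n ≤ m
    · exact t.ge_antitone hn W hm
    · have up : ∀ k : ℕ, t.ge (m + k) W := by
        intro k
        induction k with
        | zero => simpa using hm
        | succ k ih =>
          have h := geStep W (m + k) ih hFW
          have e : m + ((k+1 : ℕ) : ℤ) = m + (k : ℤ) + 1 := by push_cast; ring
          rw [e]; exact h
      have := up (n - m).toNat
      have he : m + ((n - m).toNat : ℤ) = n := by omega
      rwa [he] at this
  -- objects killed by `F` are zero
  have main : ∀ Z : C, IsZero (F.obj Z) → IsZero Z := by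
    intro Z hZ
    obtain ⟨A, B, f, g, h, hA, hB, mem, hFA, hFB⟩ := trunc Z hZ 0
    have hAzero : IsZero A := zeroLE A 0 hA hFA
    have hBzero : IsZero B := zeroGE B 1 hB hFB
    have hg : IsIso g := (Triangle.isZero₁_iff_isIso₂ _ mem).1 hAzero
    exact IsZero.of_iso hBzero (asIso g)
  -- conclusion
  intro X Y f hf
  obtain ⟨Z, g, h, mem⟩ := distinguished_cocone_triangle f
  have memF := F.map_distinguished _ mem
  have hFZ : IsZero (F.obj Z) :=
    Triangle.isZero₃_of_isIso₁ _ memF (by exact hf)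
  exact (Triangle.isZero₃_iff_isIso₁ _ mem).1 (main Z hFZ)
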